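/- For every natural number n ≥ 2 and every m with 0 ≤ m ≤ n, the identity n·P_{m-1} + P_m = Σ_{k=0}^{m} P_k · C(n-k, m-k) holds, where P_k is the k-th elementary symmetric function of {1, 2, …, n-1}, with the conventions P_0 = 1 and P_i = 0 for i < 0 and i ≥ n. -/

import Mathlib

/-- `P n k` is the `k`-th elementary symmetric function of `{1, 2, …, n-1}`
(indexed by an integer `k`), with `P n k = 0` for `k < 0` and for `k ≥ n`,
and `P n 0 = 1`. -/
def P (n : ℕ) (k : ℤ) : ℤ :=
  if 0 ≤ k then
    ∑ s ∈ Finset.powersetCard k.toNat (Finset.Icc 1 (n - 1)), ∏ a ∈ s, (a : ℤ)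
  else 0

open Polynomial Finset


noncomputable def fpoly (n : ℕ) : Polynomial ℤ := ∏ i ∈ Finset.Icc 1 (n-1), (X + C (i:ℤ))

lemma card_Icc' (n : ℕ) : #(Finset.Icc 1 (n-1)) = n - 1 := by simp

lemma fpoly_natDegree (n : ℕ) : (fpoly n).natDegree = n - 1 := by
  rw [fpoly, natDegree_prod (h := fun i _ => X_add_C_ne_zero _)]
  simp only [natDegree_X_add_C]
  simp [card_Icc']

lemma P_of_ge (n k : ℕ) (h : n ≤ k) (hn : 1 ≤ n) : P n k = 0 := by
  rw [P, if_pos (by positivity)]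
  have : (Finset.Icc 1 (n-1)).powersetCard (k : ℤ).toNat = ∅ := by
    rw [Finset.powersetCard_eq_empty, card_Icc']
    simp only [Int.toNat_natCast]
    omega
  simp only [Int.toNat_natCast] at this ⊢
  rw [this]
  simp

lemma fpoly_coeff (n : ℕ) (hn : 1 ≤ n) (j : ℕ) :
    (fpoly n).coeff j = P n ((n:ℤ) - 1 - j) := by
  rcases le_or_gt j (n-1) with h | h
  · rw [fpoly, Finset.prod_X_add_C_coeff _ _ (by rw [card_Icc']; exact h)]
    rw [P, if_pos (by omega)]
    congr 2
    rw [card_Icc']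
    omega
  · rw [coeff_eq_zero_of_natDegree_lt (by rw [fpoly_natDegree]; exact h),
      P, if_neg (by omega)]

lemma Xfpoly_coeff (n : ℕ) (hn : 1 ≤ n) (j : ℕ) :
    (X * fpoly n).coeff j = P n ((n:ℤ) - j) := by
  cases j with
  | zero =>
    rw [mul_coeff_zero, coeff_X_zero, zero_mul]
    simp only [Nat.cast_zero, sub_zero]
    exact (P_of_ge n n le_rfl hn).symm
  | succ j =>
    rw [coeff_X_mul, fpoly_coeff n hn j]
    congr 1
    push_cast
    ring

lemma key_prod (n : ℕ) (hn : 2 ≤ n) :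
    (X + C (n:ℤ)) * fpoly n = (X + C 1) * (fpoly n).comp (X + C 1) := by
  have hcomp : (fpoly n).comp (X + C 1) = ∏ i ∈ Finset.Icc 2 n, (X + C (i:ℤ)) := by
    rw [fpoly, Polynomial.prod_comp]
    have himg : Finset.Icc 2 n = (Finset.Icc 1 (n-1)).image (· + 1) := by
      ext x
      simp only [Finset.mem_Icc, Finset.mem_image]
      constructor
      · intro hx; exact ⟨x - 1, by omega, by omega⟩
      · rintro ⟨y, hy, rfl⟩; omega
    rw [himg, Finset.prod_image (by intro a _ b _ h; simp only at h; omega)]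
    refine Finset.prod_congr rfl fun i _ => ?_
    rw [add_comp, X_comp, C_comp]
    push_cast
    rw [C_add]
    ring
  rw [hcomp]
  have h1 : (X + C (1:ℤ)) * ∏ i ∈ Finset.Icc 2 n, (X + C (i:ℤ))
      = ∏ i ∈ Finset.Icc 1 n, (X + C (i:ℤ)) := by
    rw [show Finset.Icc 1 n = insert 1 (Finset.Icc 2 n) by
      ext x; simp [Finset.mem_Icc, Finset.mem_insert]; omega]
    rw [Finset.prod_insert (by simp)]
    norm_num
  have h2 : (X + C (n:ℤ)) * fpoly n = ∏ i ∈ Finset.Icc 1 n, (X + C (i:ℤ)) := by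
    rw [fpoly, show Finset.Icc 1 n = insert n (Finset.Icc 1 (n-1)) by
      ext x; simp [Finset.mem_Icc, Finset.mem_insert]; omega]
    rw [Finset.prod_insert (by simp; omega)]
  rw [h1, h2]

lemma fpoly_as_sum (n : ℕ) (hn : 1 ≤ n) :
    fpoly n = ∑ k ∈ Finset.range n, C (P n k) * X ^ (n - 1 - k) := by
  rw [(fpoly n).as_sum_range' n (by rw [fpoly_natDegree]; omega)]
  refine Finset.sum_nbij' (fun i => n - 1 - i) (fun k => n - 1 - k) ?_ ?_ ?_ ?_ ?_
  · intro i hi; simp only [Finset.mem_range] at *; omega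
  · intro k hk; simp only [Finset.mem_range] at *; omega
  · intro i hi; simp only [Finset.mem_range] at hi; omega
  · intro k hk; simp only [Finset.mem_range] at hk; omega
  · intro i hi
    simp only [Finset.mem_range] at hi
    rw [fpoly_coeff n hn i, show n - 1 - (n - 1 - i) = i by omega,
      C_mul_X_pow_eq_monomial]
    congr 2
    omega

/-- For every `n ≥ 2` and every `m` with `0 ≤ m ≤ n`,
`n·P_{m-1} + P_m = Σ_{k=0}^{m} P_k · C(n-k, m-k)`. -/
theorem esymm_recurrence (n : ℕ) (hn : 2 ≤ n) (m : ℕ) (hm : m ≤ n) :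
    (n : ℤ) * P n ((m : ℤ) - 1) + P n m =
      ∑ k ∈ Finset.range (m + 1), P n k * ((n - k).choose (m - k) : ℤ) := by
  have hn1 : 1 ≤ n := by omega
  -- LHS = coeff (n-m) of (X + C n) * fpoly n
  have hL : ((X + C (n:ℤ)) * fpoly n).coeff (n - m)
      = (n : ℤ) * P n ((m : ℤ) - 1) + P n m := by
    rw [add_mul, coeff_add, Xfpoly_coeff n hn1, coeff_C_mul, fpoly_coeff n hn1]
    have h1 : (n:ℤ) - (↑(n - m) : ℕ) = m := by push_cast [hm]; ring
    have h2 : (n:ℤ) - 1 - (↑(n - m) : ℕ) = (m:ℤ) - 1 := by push_cast [hm]; ring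
    rw [h1, h2]
    ring
  -- RHS
  have hR : ((X + C (1:ℤ)) * (fpoly n).comp (X + C 1)).coeff (n - m)
      = ∑ k ∈ Finset.range (m + 1), P n k * ((n - k).choose (m - k) : ℤ) := by
    rw [fpoly_as_sum n hn1]
    have hc : (∑ k ∈ Finset.range n, C (P n k) * X ^ (n - 1 - k)).comp (X + C 1)
        = ∑ k ∈ Finset.range n, C (P n k) * (X + C 1) ^ (n - 1 - k) := by
      simp [mul_comp, C_comp, X_comp, pow_comp]
    rw [hc, Finset.mul_sum]
    have hterm : ∀ k ∈ Finset.range n,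
        (X + C (1:ℤ)) * (C (P n k) * (X + C 1) ^ (n - 1 - k))
          = C (P n k) * (X + C 1) ^ (n - k) := by
      intro k hk
      simp only [Finset.mem_range] at hk
      rw [show n - k = (n - 1 - k) + 1 by omega, pow_succ]
      ring
    rw [Finset.sum_congr rfl hterm, finset_sum_coeff]
    have hcoeff : ∀ k ∈ Finset.range n,
        (C (P n k) * (X + C (1:ℤ)) ^ (n - k)).coeff (n - m)
          = P n k * ((n - k).choose (n - m) : ℤ) := by
      intro k _
      rw [coeff_C_mul, map_one, coeff_X_add_one_pow]
    rw [Finset.sum_congr rfl hcoeff]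
    -- extend to range (n+1)
    have hstep : ∑ k ∈ Finset.range n, P n k * ((n - k).choose (n - m) : ℤ)
        = ∑ k ∈ Finset.range (n + 1), P n k * ((n - k).choose (n - m) : ℤ) := by
      rw [Finset.sum_range_succ, P_of_ge n n le_rfl hn1]
      ring
    rw [hstep]
    rw [← Finset.sum_subset (Finset.range_subset_range.2 (by omega) :
        Finset.range (m+1) ⊆ Finset.range (n+1))]
    · refine Finset.sum_congr rfl fun k hk => ?_
      simp only [Finset.mem_range] at hk
      have hkm : k ≤ m := by omega
      congr 1
      norm_cast
      rw [show n - m = (n - k) - (m - k) by omega]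
      exact Nat.choose_symm (by omega)
    · intro k hk hk2
      simp only [Finset.mem_range] at hk hk2
      rw [Nat.choose_eq_zero_of_lt (by omega)]
      push_cast
      ring
  rw [← hL, key_prod n hn, hR]
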